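/- arXiv:1403.0189 — 2 statements merged into one kernel-verified Lean document; each statement's English description precedes it below -/
import Mathlib

section
/- Suppose the real sequence (α_n)_{n≥0} satisfies the structure relation with (a_k), i.e. for every n ≥ 0: [n]_q a_n = Σ_{k=0}^{n} [n choose k]_q q^{n-k} α_k a_{n-k}. Then for every integer n ≥ 1 the q-Appell polynomials satisfy the linear homogeneous recurrence [n]_q A_{n,q}(qx) = Σ_{k=0}^{n} [n choose k]_q α_{n-k} q^k A_{k,q}(x) + x [n]_q q^n A_{n-1,q}(x), as an identity of real polynomials in x. -/
open Polynomial Finset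

/-- The q-integer [n]_q = 1 + q + ... + q^(n-1). -/
noncomputable def qInt (q : ℝ) (n : ℕ) : ℝ := ∑ i ∈ Finset.range n, q ^ i

/-- The q-factorial [n]_q! = [1]_q [2]_q ... [n]_q, with [0]_q! = 1. -/
noncomputable def qFact (q : ℝ) : ℕ → ℝ
  | 0 => 1
  | n + 1 => qFact q n * qInt q (n + 1)

/-- The q-binomial coefficient [n choose k]_q = [n]_q! / ([k]_q! [n-k]_q!). -/
noncomputable def qBinom (q : ℝ) (n k : ℕ) : ℝ := qFact q n / (qFact q k * qFact q (n - k))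

/-- The q-derivative on real polynomials, determined by D_q(x^n) = [n]_q x^(n-1). -/
noncomputable def qDeriv (q : ℝ) (p : Polynomial ℝ) : Polynomial ℝ :=
  p.sum fun n a => Polynomial.C (a * qInt q n) * Polynomial.X ^ (n - 1)

/-- The q-Appell polynomials attached to the sequence (a_k):
`A_{n,q}(x) = Σ_{k=0}^{n} [n choose k]_q a_k x^(n-k)`. -/
noncomputable def qAppell (q : ℝ) (a : ℕ → ℝ) (n : ℕ) : Polynomial ℝ :=
  ∑ k ∈ Finset.range (n + 1), Polynomial.C (qBinom q n k * a k) * Polynomial.X ^ (n - k)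

lemma qInt_pos {q : ℝ} (hq : 0 < q) (n : ℕ) : 0 < qInt q (n+1) := by
  apply Finset.sum_pos (fun i _ => pow_pos hq i) (by simp)

lemma qFact_pos {q : ℝ} (hq : 0 < q) (n : ℕ) : 0 < qFact q n := by
  induction n with
  | zero => norm_num [qFact]
  | succ m ih => exact mul_pos ih (qInt_pos hq m)

lemma qInt_add (q : ℝ) (m j : ℕ) : qInt q (m + j) = qInt q m + q ^ m * qInt q j := by
  simp [qInt, Finset.sum_range_add, Finset.mul_sum, pow_add]

lemma qBinom_symm {q : ℝ} {n j : ℕ} (h : j ≤ n) : qBinom q n (n - j) = qBinom q n j := by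
  unfold qBinom
  rw [Nat.sub_sub_self h, mul_comm]

lemma qBinom_prod {q : ℝ} (hq : 0 < q) (i j r : ℕ) :
    qBinom q (i+j+r) (j+i) * qBinom q (j+i) i = qBinom q (i+j+r) j * qBinom q (i+r) r := by
  unfold qBinom
  have h1 : i+j+r - (j+i) = r := by omega
  have h2 : j+i - i = j := by omega
  have h3 : i+j+r - j = i+r := by omega
  have h4 : i+r - r = i := by omega
  rw [h1, h2, h3, h4]
  have := fun m => (qFact_pos hq m).ne'
  field_simp
  rw [div_eq_div_iff (by exact mul_ne_zero (mul_ne_zero (mul_ne_zero (this _) (this _)) (this _)) (this _)) (by exact mul_ne_zero (mul_ne_zero (mul_ne_zero (this _) (this _)) (this _)) (this _))]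
  ring

lemma qBinom_mul_qInt {q : ℝ} (hq : 0 < q) (s r : ℕ) :
    qInt q (s+1+r) * qBinom q (s+r) r = qBinom q (s+1+r) (s+1) * qInt q (s+1) := by
  unfold qBinom
  have h1 : s+r - r = s := by omega
  have h2 : s+1+r - (s+1) = r := by omega
  rw [h1, h2]
  have hf : qFact q (s+1+r) = qFact q (s+r) * qInt q (s+r+1) := by
    have : s+1+r = (s+r)+1 := by omega
    rw [this]; rfl
  have hf2 : qFact q (s+1) = qFact q s * qInt q (s+1) := rfl
  rw [hf, hf2]
  have hfz := fun m => (qFact_pos hq m).ne'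
  have hi := fun m => (qInt_pos hq m).ne'
  have : s+1+r = s+r+1 := by omega
  rw [this]
  field_simp
  rw [div_eq_div_iff (by exact mul_ne_zero (hfz _) (hfz _)) (by exact mul_ne_zero (mul_ne_zero (hfz _) (hfz _)) (hi _))]
  ring

lemma key {q : ℝ} (hq : 0 < q) (a α : ℕ → ℝ)
    (hα : ∀ n : ℕ, qInt q n * a n
      = ∑ k ∈ Finset.range (n + 1), qBinom q n k * q ^ (n - k) * α k * a (n - k))
    {n j : ℕ} (hn : 1 ≤ n) (hj : j ≤ n) :
    qInt q n * (qBinom q n (n-j) * a (n-j)) * q ^ j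
      = (∑ k ∈ Finset.Ico j (n+1), qBinom q n k * α (n-k) * q^k * (qBinom q k (k-j) * a (k-j)))
        + (if j = 0 then 0 else qInt q n * q^n * (qBinom q (n-1) (n-j) * a (n-j))) := by
  have hsum : (∑ k ∈ Finset.Ico j (n+1), qBinom q n k * α (n-k) * q^k * (qBinom q k (k-j) * a (k-j)))
      = qBinom q n j * q^j * (qInt q (n-j) * a (n-j)) := by
    rw [Finset.sum_Ico_eq_sum_range]
    have h1 : n + 1 - j = (n-j) + 1 := by omega
    rw [h1]
    calc (∑ i ∈ Finset.range ((n-j)+1),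
            qBinom q n (j+i) * α (n-(j+i)) * q^(j+i) * (qBinom q (j+i) ((j+i)-j) * a ((j+i)-j)))
        = ∑ i ∈ Finset.range ((n-j)+1),
            qBinom q n j * q^j * (qBinom q (n-j) ((n-j)-i) * q^i * α ((n-j)-i) * a i) := by
          apply Finset.sum_congr rfl
          intro i hi
          have hi' : i ≤ n - j := by simpa [Nat.lt_succ_iff] using hi
          have e1 : j + i - j = i := by omega
          have e2 : n - (j+i) = (n-j) - i := by omega
          have hp := qBinom_prod hq i j (n - j - i)
          have e3 : i + j + (n-j-i) = n := by omega
          have e4 : i + (n-j-i) = n - j := by omega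
          rw [e3, e4] at hp
          rw [e1, e2, pow_add]
          linear_combination (α ((n-j)-i) * (q^j*q^i) * a i) * hp
      _ = qBinom q n j * q^j * (qInt q (n-j) * a (n-j)) := by
          rw [← Finset.mul_sum]
          congr 1
          rw [hα (n-j), ← Finset.sum_range_reflect]
          apply Finset.sum_congr rfl
          intro i hi
          have hi' : i ≤ n - j := by simpa [Nat.lt_succ_iff] using hi
          have e1 : (n-j) + 1 - 1 - i = (n-j) - i := by omega
          have e2 : (n-j) - ((n-j) - i) = i := by omega
          rw [e1, e2]
  rw [hsum]
  rcases Nat.eq_zero_or_pos j with hj0 | hj1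
  · subst hj0
    have hs : qBinom q n n = qBinom q n 0 := by
      simpa using (qBinom_symm (q := q) (Nat.zero_le n))
    simp only [Nat.sub_zero, pow_zero, hs, if_true, reduceIte]
    ring
  · rw [if_neg (by omega)]
    have hb := qBinom_mul_qInt hq (j-1) (n-j)
    have e1 : j - 1 + 1 + (n-j) = n := by omega
    have e2 : j - 1 + (n-j) = n - 1 := by omega
    have e3 : j - 1 + 1 = j := by omega
    rw [e1, e2, e3] at hb
    -- hb : qInt q n * qBinom q (n-1) (n-j) = qBinom q n j * qInt q j
    have ha : qInt q n = qInt q (n-j) + q^(n-j) * qInt q j := by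
      have := qInt_add q (n-j) j
      rwa [Nat.sub_add_cancel hj] at this
    have hp : q^(n-j) * q^j = q^n := by
      rw [← pow_add]
      congr 1
      omega
    rw [qBinom_symm hj]
    calc qInt q n * (qBinom q n j * a (n-j)) * q ^ j
        = (qInt q (n-j) + q^(n-j) * qInt q j) * (qBinom q n j * a (n-j)) * q ^ j := by rw [← ha]
      _ = qBinom q n j * q^j * (qInt q (n-j) * a (n-j))
          + (q^(n-j) * q^j) * ((qInt q n * qBinom q (n-1) (n-j)) * a (n-j)) := by
          rw [hb]; ring
      _ = _ := by rw [hp]; ring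


/-- Under the structure relation for (α_n), the q-Appell polynomials satisfy the
linear homogeneous recurrence
`[n]_q A_{n,q}(qx) = Σ_{k=0}^n [n choose k]_q α_{n-k} q^k A_{k,q}(x) + x [n]_q q^n A_{n-1,q}(x)`. -/
theorem qAppell_recurrence (q : ℝ) (hq0 : 0 < q) (hq1 : q < 1)
    (a : ℕ → ℝ) (ha : a 0 ≠ 0) (α : ℕ → ℝ)
    (hα : ∀ n : ℕ, qInt q n * a n
      = ∑ k ∈ Finset.range (n + 1), qBinom q n k * q ^ (n - k) * α k * a (n - k))
    (n : ℕ) (hn : 1 ≤ n) :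
    Polynomial.C (qInt q n) * (qAppell q a n).comp (Polynomial.C q * Polynomial.X)
      = (∑ k ∈ Finset.range (n + 1),
          Polynomial.C (qBinom q n k * α (n - k) * q ^ k) * qAppell q a k)
        + Polynomial.C (qInt q n * q ^ n) * Polynomial.X * qAppell q a (n - 1) := by
  have hL : Polynomial.C (qInt q n) * (qAppell q a n).comp (Polynomial.C q * Polynomial.X)
      = ∑ j ∈ Finset.range (n+1),
          Polynomial.C (qInt q n * (qBinom q n (n-j) * a (n-j)) * q^j) * X^j := by
    rw [qAppell, Polynomial.sum_comp, Finset.mul_sum, ← Finset.sum_range_reflect]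
    apply Finset.sum_congr rfl
    intro j hj
    have hj' : j ≤ n := by simpa [Nat.lt_succ_iff] using hj
    have e1 : n + 1 - 1 - j = n - j := by omega
    have e2 : n - (n - j) = j := by omega
    rw [e1]
    simp only [mul_comp, C_comp, pow_comp, X_comp, e2, C_mul, C_pow, mul_pow]
    ring
  have hT2 : Polynomial.C (qInt q n * q^n) * X * qAppell q a (n-1)
      = ∑ j ∈ Finset.range (n+1), (if j = 0 then 0 else
          Polynomial.C (qInt q n * q^n * (qBinom q (n-1) (n-j) * a (n-j))) * X^j) := by
    rw [Finset.sum_range_succ']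
    simp only [if_neg (Nat.succ_ne_zero _), reduceIte, add_zero]
    rw [qAppell, Finset.mul_sum]
    have e0 : n - 1 + 1 = n := by omega
    rw [e0, ← Finset.sum_range_reflect]
    apply Finset.sum_congr rfl
    intro i hi
    have hi' : i < n := by simpa using hi
    have e1 : n - 1 - (n - 1 - i) = i := by omega
    have e2 : n - 1 - i = n - (i+1) := by omega
    rw [show n - 1 - i = n - 1 - i from rfl]
    rw [e1]
    rw [show (n : ℕ) - 1 - i = n - (i+1) from e2]
    simp only [C_mul, pow_succ]
    ring
  have hT1 : (∑ k ∈ Finset.range (n + 1),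
        Polynomial.C (qBinom q n k * α (n - k) * q ^ k) * qAppell q a k)
      = ∑ j ∈ Finset.range (n+1),
          Polynomial.C (∑ k ∈ Finset.Ico j (n+1),
            qBinom q n k * α (n-k) * q^k * (qBinom q k (k-j) * a (k-j))) * X^j := by
    have step1 : (∑ k ∈ Finset.range (n + 1),
        Polynomial.C (qBinom q n k * α (n - k) * q ^ k) * qAppell q a k)
        = ∑ k ∈ Finset.range (n+1), ∑ j ∈ Finset.range (k+1),
            Polynomial.C (qBinom q n k * α (n-k) * q^k * (qBinom q k (k-j) * a (k-j))) * X^j := by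
      apply Finset.sum_congr rfl
      intro k hk
      rw [qAppell, Finset.mul_sum, ← Finset.sum_range_reflect]
      apply Finset.sum_congr rfl
      intro j hj
      have hj' : j ≤ k := by simpa [Nat.lt_succ_iff] using hj
      have e1 : k + 1 - 1 - j = k - j := by omega
      have e2 : k - (k - j) = j := by omega
      rw [e1, e2]
      simp only [C_mul]
      ring
    rw [step1]
    have step2 : (∑ k ∈ Finset.range (n+1), ∑ j ∈ Finset.range (k+1),
            Polynomial.C (qBinom q n k * α (n-k) * q^k * (qBinom q k (k-j) * a (k-j))) * X^j)
        = ∑ j ∈ Finset.range (n+1), ∑ k ∈ Finset.Ico j (n+1),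
            Polynomial.C (qBinom q n k * α (n-k) * q^k * (qBinom q k (k-j) * a (k-j))) * X^j := by
      simp only [Finset.range_eq_Ico]
      rw [← Finset.sum_Ico_Ico_comm]
    rw [step2]
    apply Finset.sum_congr rfl
    intro j hj
    rw [map_sum, Finset.sum_mul]
  rw [hL, hT1, hT2, ← Finset.sum_add_distrib]
  apply Finset.sum_congr rfl
  intro j hj
  have hj' : j ≤ n := by simpa [Nat.lt_succ_iff] using hj
  rw [key hq0 a α hα hn hj', C_add, add_mul]
  congr 1
  split_ifs with h
  · simp
  · rfl
end

section
/- For every n ∈ ℕ and every real x, the q-Hermite polynomial tends to the probabilists' Hermite polynomial in the limit: lim_{q → 1⁻} H_{n,q}(x) = He_n(x), where He_n is the n-th probabilists' Hermite polynomial (the monic polynomials with generating function exp(tx − t²/2) = Σ He_n(x) t^n/n!). -/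
open Polynomial Finset

/-- The q-double factorial `[2n]_q!! = [2n]_q [2n-2]_q ⋯ [2]_q`, with `[0]_q!! = 1`;
`qEvenDFact q n` is `[2n]_q!!`. -/
noncomputable def qEvenDFact (q : ℝ) : ℕ → ℝ
  | 0 => 1
  | n + 1 => qInt q (2 * (n + 1)) * qEvenDFact q n

/-- The coefficients of the q-Hermite polynomials:
`h_{2k} = (−1)^k q^(k(k-1)) [2k]_q!/[2k]_q!!` and `h_{2k+1} = 0`. -/
noncomputable def qHermiteCoeff (q : ℝ) (m : ℕ) : ℝ :=
  if m % 2 = 0 then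
    (-1 : ℝ) ^ (m / 2) * q ^ ((m / 2) * (m / 2 - 1)) * qFact q m / qEvenDFact q (m / 2)
  else 0

/-- The q-Hermite polynomials `H_{n,q}(x) = Σ_{m=0}^n [n choose m]_q h_m x^(n-m)`. -/
noncomputable def qHermite (q : ℝ) (n : ℕ) : Polynomial ℝ :=
  ∑ m ∈ Finset.range (n + 1),
    Polynomial.C (qBinom q n m * qHermiteCoeff q m) * Polynomial.X ^ (n - m)



open Nat in
lemma qInt_one (n : ℕ) : qInt 1 n = n := by simp [qInt]

lemma continuous_qInt (n : ℕ) : Continuous fun q : ℝ => qInt q n := by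
  unfold qInt
  exact continuous_finset_sum _ fun i _ => continuous_pow i

open Nat in
lemma qFact_one (n : ℕ) : qFact 1 n = n ! := by
  induction n with
  | zero => simp [qFact]
  | succ k ih =>
    simp only [qFact, ih, qInt_one, Nat.factorial_succ]
    push_cast; ring

lemma continuous_qFact (n : ℕ) : Continuous fun q : ℝ => qFact q n := by
  induction n with
  | zero => simpa [qFact] using continuous_const
  | succ k ih => exact ih.mul (continuous_qInt (k + 1))

lemma qFact_one_ne (n : ℕ) : qFact 1 n ≠ 0 := by
  rw [qFact_one]; exact_mod_cast n.factorial_ne_zero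

open Nat in
lemma qEvenDFact_one (n : ℕ) : qEvenDFact 1 n = 2 ^ n * n ! := by
  induction n with
  | zero => simp [qEvenDFact]
  | succ k ih =>
    simp only [qEvenDFact, ih, qInt_one, Nat.factorial_succ]
    push_cast; ring

lemma continuous_qEvenDFact (n : ℕ) : Continuous fun q : ℝ => qEvenDFact q n := by
  induction n with
  | zero => simpa [qEvenDFact] using continuous_const
  | succ k ih => exact (continuous_qInt _).mul ih

lemma qEvenDFact_one_ne (n : ℕ) : qEvenDFact 1 n ≠ 0 := by
  rw [qEvenDFact_one]
  exact mul_ne_zero (by positivity) (by exact_mod_cast n.factorial_ne_zero)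

lemma continuousAt_qHermiteCoeff (m : ℕ) :
    ContinuousAt (fun q : ℝ => qHermiteCoeff q m) 1 := by
  unfold qHermiteCoeff
  by_cases h : m % 2 = 0
  · simp only [h, if_true]
    exact ((continuous_const.mul (continuous_pow _)).mul (continuous_qFact m)
      ).continuousAt.div (continuous_qEvenDFact _).continuousAt (qEvenDFact_one_ne _)
  · simp only [h, if_false]
    exact continuousAt_const

lemma continuousAt_qBinom (n m : ℕ) : ContinuousAt (fun q : ℝ => qBinom q n m) 1 := by
  unfold qBinom
  exact (continuous_qFact n).continuousAt.div
    ((continuous_qFact m).mul (continuous_qFact (n - m))).continuousAt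
    (mul_ne_zero (qFact_one_ne m) (qFact_one_ne (n - m)))

open Nat in
lemma two_mul_factorial (k : ℕ) : (2 * k)! = 2 ^ k * k ! * (2 * k - 1)‼ := by
  cases k with
  | zero => rfl
  | succ j =>
    have h1 : 2 * (j + 1) = (2 * j + 1) + 1 := by ring
    have h2 : 2 * (j + 1) - 1 = 2 * j + 1 := by omega
    rw [h2, h1, Nat.factorial_eq_mul_doubleFactorial, ← h1, Nat.doubleFactorial_two_mul]

open Nat in
lemma qHermiteCoeff_one (m : ℕ) :
    qHermiteCoeff 1 m =
      if m % 2 = 0 then (-1 : ℝ) ^ (m / 2) * (((m - 1)‼ : ℕ) : ℝ) else 0 := by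
  unfold qHermiteCoeff
  by_cases h : m % 2 = 0
  · simp only [h, if_true, one_pow, mul_one, qFact_one, qEvenDFact_one]
    obtain ⟨k, rfl⟩ : ∃ k, m = 2 * k := ⟨m / 2, by omega⟩
    have hk : 2 * k / 2 = k := by omega
    rw [hk, two_mul_factorial]
    have h2 : ((2:ℝ) ^ k * (k ! : ℝ)) ≠ 0 :=
      mul_ne_zero (by positivity) (by exact_mod_cast k.factorial_ne_zero)
    push_cast
    field_simp
  · simp [h]

open Nat in
lemma qBinom_one (n m : ℕ) (h : m ≤ n) : qBinom 1 n m = n.choose m := by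
  unfold qBinom
  rw [qFact_one, qFact_one, qFact_one]
  have key := Nat.choose_mul_factorial_mul_factorial h
  have h1 : ((m ! : ℕ) : ℝ) ≠ 0 := by exact_mod_cast m.factorial_ne_zero
  have h2 : (((n - m)! : ℕ) : ℝ) ≠ 0 := by exact_mod_cast (n - m).factorial_ne_zero
  rw [div_eq_iff (mul_ne_zero h1 h2)]
  exact_mod_cast (by rw [← key]; ring_nf : (n ! : ℕ) = n.choose m * (m ! * (n - m)!))

lemma qHermite_eval (q : ℝ) (n : ℕ) (x : ℝ) :
    (qHermite q n).eval x =
      ∑ m ∈ Finset.range (n + 1), qBinom q n m * qHermiteCoeff q m * x ^ (n - m) := by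
  rw [qHermite, Polynomial.eval_finset_sum]
  simp [mul_assoc]

lemma qHermite_one_eval (n : ℕ) (x : ℝ) :
    (qHermite 1 n).eval x = Polynomial.aeval x (Polynomial.hermite n) := by
  rw [qHermite_eval, Polynomial.aeval_eq_sum_range]
  rw [Polynomial.natDegree_hermite]
  rw [← Finset.sum_range_reflect (fun k => ((Polynomial.hermite n).coeff k : ℤ) • x ^ k) (n + 1)]
  refine Finset.sum_congr rfl fun m hm => ?_
  have hmn : m ≤ n := by
    simp only [Finset.mem_range] at hm; omega
  have h1 : n + 1 - 1 - m = n - m := by omega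
  rw [h1, zsmul_eq_mul, Polynomial.coeff_hermite]
  have hsub : n - (n - m) = m := by omega
  have heven : Even (n + (n - m)) ↔ m % 2 = 0 := by
    rw [Nat.even_iff]; omega
  rw [qBinom_one n m hmn, qHermiteCoeff_one, hsub]
  by_cases h : m % 2 = 0
  · rw [if_pos h, if_pos (heven.mpr h), Nat.choose_symm hmn]
    push_cast
    ring
  · rw [if_neg h, if_neg (fun he => h (heven.mp he))]
    simp

/-- As q → 1⁻, the q-Hermite polynomial H_{n,q}(x) tends to the n-th probabilists'
Hermite polynomial He_n(x). -/
theorem qHermite_tendsto_hermite (n : ℕ) (x : ℝ) :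
    Filter.Tendsto (fun q : ℝ => (qHermite q n).eval x)
      (nhdsWithin 1 (Set.Iio 1))
      (nhds (Polynomial.aeval x (Polynomial.hermite n))) := by
  have hc : ContinuousAt (fun q : ℝ => (qHermite q n).eval x) 1 := by
    have heq : (fun q : ℝ => (qHermite q n).eval x) =
        fun q => ∑ m ∈ Finset.range (n + 1), qBinom q n m * qHermiteCoeff q m * x ^ (n - m) := by
      funext q; exact qHermite_eval q n x
    rw [heq]
    exact tendsto_finset_sum _ fun m _ =>
      (((continuousAt_qBinom n m).mul (continuousAt_qHermiteCoeff m)).mul continuousAt_const)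
  have h := hc.continuousWithinAt (s := Set.Iio 1)
  rw [ContinuousWithinAt, qHermite_one_eval] at h
  exact h
end
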